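/- Let A be a weakly noetherian B₁-algebra and let I be a saturated ideal of A. Then there exist finitely many saturated prime ideals P₁, …, Pₙ of A such that r(I) = P₁ ∩ … ∩ Pₙ. -/

import Mathlib

/-- An ideal `I` of a `B₁`-algebra is *saturated* if `y ∈ I` and `x + y = y` imply `x ∈ I`. -/
def IsSaturated {A : Type*} [CommSemiring A] (I : Ideal A) : Prop :=
  ∀ x y : A, y ∈ I → x + y = y → x ∈ I

/-- The radical `r(S) = {x | xⁿ ∈ S for some n ≥ 1}` of a subset `S`. -/
def rad {A : Type*} [CommSemiring A] (S : Set A) : Set A :=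
  {x | ∃ n : ℕ, 1 ≤ n ∧ x ^ n ∈ S}

/-- `A` is *weakly noetherian* if every ascending chain of saturated ideals is eventually
stationary. -/
def WeaklyNoetherian (A : Type*) [CommSemiring A] : Prop :=
  ∀ f : ℕ → Ideal A, (∀ n, IsSaturated (f n)) → (∀ n, f n ≤ f (n + 1)) →
    ∃ N, ∀ n, N ≤ n → f n = f N

section Aux

variable {A : Type*} [CommSemiring A]

lemma B1.add_idem (hchar : (1 : A) + 1 = 1) (a : A) : a + a = a := by
  calc a + a = a * (1 + 1) := by ring
    _ = a := by rw [hchar, mul_one]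

lemma B1.mul_le (hchar : (1 : A) + 1 = 1) {x y x' y' : A}
    (hx : x + y = y) (hx' : x' + y' = y') : x * x' + y * y' = y * y' := by
  have h : (x + y) * (x' + y') = x * x' + (x * y' + (y * x' + y * y')) := by ring
  calc x * x' + y * y' = x * x' + (x + y) * (x' + y') := by rw [hx, hx']
    _ = x * x' + (x * x' + (x * y' + (y * x' + y * y'))) := by rw [h]
    _ = (x * x' + x * x') + (x * y' + (y * x' + y * y')) := by rw [add_assoc]
    _ = x * x' + (x * y' + (y * x' + y * y')) := by rw [B1.add_idem hchar]
    _ = (x + y) * (x' + y') := h.symm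
    _ = y * y' := by rw [hx, hx']

lemma B1.pow_le (hchar : (1 : A) + 1 = 1) {x y : A} (hx : x + y = y) (n : ℕ) :
    x ^ n + y ^ n = y ^ n := by
  induction n with
  | zero => simpa using hchar
  | succ n ih =>
    have := B1.mul_le hchar hx ih
    simpa [pow_succ, mul_comm] using this

/-- The saturation of an ideal, as an ideal (in a `B₁`-algebra). -/
def satIdeal (K : Ideal A) : Ideal A where
  carrier := {x | ∃ y ∈ K, x + y = y}
  zero_mem' := ⟨0, K.zero_mem, zero_add 0⟩
  add_mem' := by
    rintro a b ⟨y, hy, hay⟩ ⟨y', hy', hby'⟩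
    exact ⟨y + y', K.add_mem hy hy', by
      calc a + b + (y + y') = (a + y) + (b + y') := by ring
        _ = y + y' := by rw [hay, hby']⟩
  smul_mem' := by
    rintro r a ⟨y, hy, hay⟩
    exact ⟨r * y, K.mul_mem_left r hy, by
      rw [smul_eq_mul, ← mul_add, hay]⟩

lemma mem_satIdeal {K : Ideal A} {x : A} : x ∈ satIdeal K ↔ ∃ y ∈ K, x + y = y := Iff.rfl

lemma le_satIdeal' (hchar : (1 : A) + 1 = 1) (K : Ideal A) : K ≤ satIdeal K := by
  intro x hx
  exact ⟨x, hx, B1.add_idem hchar x⟩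

lemma satIdeal_isSaturated (K : Ideal A) : IsSaturated (satIdeal K) := by
  rintro x y ⟨z, hz, hyz⟩ hxy
  refine ⟨z, hz, ?_⟩
  calc x + z = x + (y + z) := by rw [hyz]
    _ = (x + y) + z := by ring
    _ = y + z := by rw [hxy]
    _ = z := hyz

lemma radical_isSaturated (hchar : (1 : A) + 1 = 1) {K : Ideal A} (hK : IsSaturated K) :
    IsSaturated K.radical := by
  rintro x y ⟨m, hm⟩ hxy
  exact ⟨m, hK _ _ hm (B1.pow_le hchar hxy m)⟩

lemma rad_eq_radical (J : Ideal A) : rad (J : Set A) = (J.radical : Set A) := by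
  ext x
  constructor
  · rintro ⟨n, _, hn⟩; exact ⟨n, hn⟩
  · rintro ⟨n, hn⟩
    rcases Nat.eq_zero_or_pos n with rfl | hpos
    · refine ⟨1, le_refl 1, ?_⟩
      simp only [pow_zero] at hn
      simpa using J.mul_mem_left x hn
    · exact ⟨n, hpos, hn⟩

/-- Existence of maximal elements among a nonempty family of saturated ideals. -/
lemma exists_maximal (hwn : WeaklyNoetherian A) (S : Set (Ideal A))
    (hSsat : ∀ J ∈ S, IsSaturated J) (hne : S.Nonempty) :
    ∃ M ∈ S, ∀ K ∈ S, M ≤ K → K = M := by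
  by_contra h
  push_neg at h
  have hstep : ∀ J : {J // J ∈ S}, ∃ K : {J // J ∈ S}, J.1 ≤ K.1 ∧ K.1 ≠ J.1 := by
    rintro ⟨J, hJ⟩
    obtain ⟨K, hK, hle, hne'⟩ := h J hJ
    exact ⟨⟨K, hK⟩, hle, hne'⟩
  choose g hg1 hg2 using hstep
  obtain ⟨J0, hJ0⟩ := hne
  let f : ℕ → {J // J ∈ S} := fun n => g^[n] ⟨J0, hJ0⟩
  have hfsucc : ∀ n, f (n + 1) = g (f n) := fun n =>
    Function.iterate_succ_apply' g n _
  obtain ⟨N, hN⟩ := hwn (fun n => (f n).1)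
    (fun n => hSsat _ (f n).2)
    (fun n => by rw [hfsucc n]; exact hg1 (f n))
  have h1 : ((f (N + 1)).1 : Ideal A) = (f N).1 := hN (N + 1) (Nat.le_succ N)
  rw [hfsucc N] at h1
  exact hg2 (f N) h1

end Aux

/-- In a weakly noetherian `B₁`-algebra, the radical of a saturated ideal is a finite
intersection of saturated prime ideals. -/
theorem rad_saturated_eq_inter_primes {A : Type*} [CommSemiring A]
    (hchar : (1 : A) + 1 = 1) (hwn : WeaklyNoetherian A) (I : Ideal A)
    (hIsat : IsSaturated I) :
    ∃ (n : ℕ) (P : Fin n → Ideal A),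
      (∀ i, IsSaturated (P i) ∧ (P i).IsPrime) ∧
        rad (I : Set A) = ⋂ i, ((P i : Ideal A) : Set A) := by
  by_contra hcon
  set S : Set (Ideal A) := {J | IsSaturated J ∧
    ¬∃ (n : ℕ) (P : Fin n → Ideal A),
      (∀ i, IsSaturated (P i) ∧ (P i).IsPrime) ∧
        rad (J : Set A) = ⋂ i, ((P i : Ideal A) : Set A)} with hS
  have hIS : I ∈ S := ⟨hIsat, hcon⟩
  obtain ⟨M, ⟨hMsat, hMne⟩, hMmax⟩ := exists_maximal hwn S (fun J hJ => hJ.1) ⟨I, hIS⟩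
  -- M is radical
  have hMrad : M.radical = M := by
    refine hMmax M.radical ⟨radical_isSaturated hchar hMsat, ?_⟩ Ideal.le_radical
    rw [rad_eq_radical, Ideal.radical_idem, ← rad_eq_radical]
    exact hMne
  -- 1 ∉ M
  have hone : (1 : A) ∉ M := by
    intro h1
    apply hMne
    refine ⟨0, Fin.elim0, fun i => i.elim0, ?_⟩
    rw [Set.iInter_of_empty]
    ext x
    simp only [Set.mem_univ, iff_true]
    exact ⟨1, le_refl 1, by simpa using M.mul_mem_left x h1⟩
  -- M is not prime
  have hMnp : ¬ M.IsPrime := by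
    intro hp
    apply hMne
    refine ⟨1, fun _ => M, fun i => ⟨hMsat, hp⟩, ?_⟩
    rw [rad_eq_radical, hMrad]
    exact (Set.iInter_const _).symm
  rw [Ideal.isPrime_iff] at hMnp
  push_neg at hMnp
  obtain ⟨a, b, hab, ha, hb⟩ := hMnp (by intro h; exact hone (h ▸ Submodule.mem_top))
  -- the two bigger ideals
  set Ja : Ideal A := (satIdeal (M ⊔ Ideal.span {a})).radical with hJa
  set Jb : Ideal A := (satIdeal (M ⊔ Ideal.span {b})).radical with hJb
  have hJasat : IsSaturated Ja := radical_isSaturated hchar (satIdeal_isSaturated _)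
  have hJbsat : IsSaturated Jb := radical_isSaturated hchar (satIdeal_isSaturated _)
  have hMle : ∀ c : A, M ≤ (satIdeal (M ⊔ Ideal.span {c})).radical := fun c =>
    le_trans (le_trans le_sup_left (le_satIdeal' hchar _)) Ideal.le_radical
  have hmemJ : ∀ c : A, c ∈ (satIdeal (M ⊔ Ideal.span {c})).radical := fun c =>
    Ideal.le_radical (le_satIdeal' hchar _ (le_sup_right (a := M)
      (Ideal.subset_span (Set.mem_singleton c))))
  -- Ja, Jb are expressible
  have hexpr : ∀ (c : A), c ∉ M →
      ∃ (n : ℕ) (P : Fin n → Ideal A),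
        (∀ i, IsSaturated (P i) ∧ (P i).IsPrime) ∧
          ((satIdeal (M ⊔ Ideal.span {c})).radical : Set A) =
            ⋂ i, ((P i : Ideal A) : Set A) := by
    intro c hc
    set J : Ideal A := (satIdeal (M ⊔ Ideal.span {c})).radical with hJdef
    have hJsat : IsSaturated J := radical_isSaturated hchar (satIdeal_isSaturated _)
    have hJne : J ∉ S := by
      intro hJS
      have := hMmax J hJS (hMle c)
      exact hc (this ▸ hmemJ c)
    have : ¬¬∃ (n : ℕ) (P : Fin n → Ideal A),
        (∀ i, IsSaturated (P i) ∧ (P i).IsPrime) ∧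
          rad (J : Set A) = ⋂ i, ((P i : Ideal A) : Set A) := by
      intro hn
      exact hJne ⟨hJsat, hn⟩
    rw [not_not] at this
    obtain ⟨n, P, hP, heq⟩ := this
    refine ⟨n, P, hP, ?_⟩
    have hJJ : J.radical = J := by rw [hJdef]; exact Ideal.radical_idem _
    rw [← heq, rad_eq_radical, hJJ]
  obtain ⟨na, Pa, hPa, heqa⟩ := hexpr a ha
  obtain ⟨nb, Pb, hPb, heqb⟩ := hexpr b hb
  -- key: Ja ∩ Jb ⊆ M
  have hkey : (Ja : Set A) ∩ (Jb : Set A) ⊆ (M : Set A) := by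
    rintro x ⟨⟨n, hn⟩, ⟨m, hm⟩⟩
    obtain ⟨y, hy, hxy⟩ := hn
    obtain ⟨y', hy', hxy'⟩ := hm
    have hyy' : y * y' ∈ M := by
      obtain ⟨u, hu, v, hv, rfl⟩ := Submodule.mem_sup.mp hy
      obtain ⟨u', hu', v', hv', rfl⟩ := Submodule.mem_sup.mp hy'
      obtain ⟨r, rfl⟩ := Ideal.mem_span_singleton'.mp hv
      obtain ⟨s, rfl⟩ := Ideal.mem_span_singleton'.mp hv'
      have : (u + r * a) * (u' + s * b) =
          u * u' + u * (s * b) + u' * (r * a) + (r * s) * (a * b) := by ring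
      rw [this]
      exact M.add_mem (M.add_mem (M.add_mem (M.mul_mem_right _ hu)
        (M.mul_mem_right _ hu)) (M.mul_mem_right _ hu')) (M.mul_mem_left _ hab)
    have hle : x ^ (n + m) + y * y' = y * y' := by
      have := B1.mul_le hchar hxy hxy'
      simpa [pow_add] using this
    have : x ^ (n + m) ∈ M := hMsat _ _ hyy' hle
    rw [← hMrad]
    exact ⟨n + m, this⟩
  -- conclude M expressible, contradiction
  apply hMne
  refine ⟨na + nb, Fin.append Pa Pb, ?_, ?_⟩
  · intro i
    induction i using Fin.addCases with
    | left i => simpa [Fin.append_left] using hPa i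
    | right j => simpa [Fin.append_right] using hPb j
  · rw [rad_eq_radical, hMrad]
    have hiInter : (⋂ i, ((Fin.append Pa Pb i : Ideal A) : Set A)) =
        (⋂ i, ((Pa i : Ideal A) : Set A)) ∩ ⋂ j, ((Pb j : Ideal A) : Set A) := by
      ext x
      simp only [Set.mem_iInter, Set.mem_inter_iff]
      constructor
      · intro h
        exact ⟨fun i => by simpa [Fin.append_left] using h (Fin.castAdd nb i),
          fun j => by simpa [Fin.append_right] using h (Fin.natAdd na j)⟩
      · rintro ⟨h1, h2⟩ i
        induction i using Fin.addCases with
        | left i => simpa [Fin.append_left] using h1 i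
        | right j => simpa [Fin.append_right] using h2 j
    rw [hiInter, ← heqa, ← heqb]
    apply Set.Subset.antisymm
    · intro x hx
      exact ⟨hMle a hx, hMle b hx⟩
    · exact fun x hx => hkey hx
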